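/- For all nonnegative integers a1, a2, b1, b2, the product h1^{a1} h2^{a2} v1^{b1} v2^{b2} belongs to I_W if and only if a1 + b1 ≥ m11, a1 + b2 ≥ m12 and a2 + b1 ≥ m21. -/

import Mathlib

open MvPolynomial

/-- Solving a 2×2 linear system with nonzero determinant over `Polynomial k`. -/
lemma solve2 {k : Type*} [Field k] {c0 c1 d0 d1 : k} (hdet : c0 * d1 - c1 * d0 ≠ 0)
    (u w : Polynomial k) :
    ∃ β0 β1 : Polynomial k, c0 • β0 + c1 • β1 = u ∧ d0 • β0 + d1 • β1 = w := by
  refine ⟨(c0 * d1 - c1 * d0)⁻¹ • (d1 • u - c1 • w),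
          (c0 * d1 - c1 * d0)⁻¹ • (c0 • w - d0 • u), ?_, ?_⟩ <;>
  · match_scalars <;> ring_nf at hdet ⊢ <;> field_simp <;> ring

/-- A linearly independent pair in the span of two variables has nonzero determinant. -/
lemma det_ne {k : Type*} [Field k] {h1 h2 : MvPolynomial (Fin 4) k} {i j : Fin 4}
    {c0 c1 d0 d1 : k}
    (hc : c0 • X i + c1 • X j = h1) (hd : d0 • X i + d1 • X j = h2)
    (hind : LinearIndependent k ![h1, h2]) : c0 * d1 - c1 * d0 ≠ 0 := by
  intro he
  have pair := LinearIndependent.pair_iff.mp hind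
  have heC : (C c0 * C d1 - C c1 * C d0 : MvPolynomial (Fin 4) k) = 0 := by
    rw [← C_mul, ← C_mul, ← C_sub, he, C_0]
  have e1 : d1 • h1 + (-c1) • h2 = 0 := by
    rw [← hc, ← hd]; simp only [smul_eq_C_mul, map_neg]
    linear_combination (X i : MvPolynomial (Fin 4) k) * heC
  have e2 : (-d0) • h1 + c0 • h2 = 0 := by
    rw [← hc, ← hd]; simp only [smul_eq_C_mul, map_neg]
    linear_combination (X j : MvPolynomial (Fin 4) k) * heC
  obtain ⟨hd1, hc1'⟩ := pair _ _ e1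
  obtain ⟨hd0', hc0⟩ := pair _ _ e2
  have hc1 : c1 = 0 := by simpa using hc1'
  have hz : h1 = 0 := by rw [← hc, hc0, hc1]; simp
  have := pair 1 0 (by rw [hz]; simp)
  exact one_ne_zero this.1

/-- A membership certificate for a power of a two-generated ideal forces a degree bound,
detected through a specialization to `Polynomial k` sending both generators to `X`. -/
lemma key_le {k : Type*} [Field k]
    (f g p : MvPolynomial (Fin 4) k) (m n : ℕ)
    (α : Fin 4 → Polynomial k)
    (hf : aeval α f = Polynomial.X) (hg : aeval α g = Polynomial.X)
    (hp : aeval α p = Polynomial.X ^ n)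
    (hmem : p ∈ Ideal.span {f, g} ^ m) : m ≤ n := by
  have h1 : aeval α p ∈ Ideal.map (aeval α : MvPolynomial (Fin 4) k →ₐ[k] Polynomial k).toRingHom
      (Ideal.span {f, g} ^ m) := Ideal.mem_map_of_mem _ hmem
  rw [Ideal.map_pow, Ideal.map_span] at h1
  have himg : (aeval α : MvPolynomial (Fin 4) k →ₐ[k] Polynomial k).toRingHom '' {f, g}
      = {Polynomial.X} := by
    simp [Set.image_insert_eq, hf, hg]
  rw [himg, Ideal.span_singleton_pow, hp] at h1
  have hdvd : Polynomial.X ^ m ∣ (Polynomial.X : Polynomial k) ^ n :=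
    Ideal.mem_span_singleton.mp h1
  have := Polynomial.natDegree_le_of_dvd hdvd (pow_ne_zero _ Polynomial.X_ne_zero)
  simpa using this

/-- `f ^ a * g ^ b ∈ (f, g) ^ m` whenever `m ≤ a + b`. -/
lemma mem_pow_of_le {R : Type*} [CommRing R] (f g : R) (a b m : ℕ) (h : m ≤ a + b) :
    f ^ a * g ^ b ∈ Ideal.span {f, g} ^ m := by
  have hf : f ∈ Ideal.span ({f, g} : Set R) := Ideal.subset_span (by simp)
  have hg : g ∈ Ideal.span ({f, g} : Set R) := Ideal.subset_span (by simp)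
  have key : f ^ a * g ^ b ∈ Ideal.span ({f, g} : Set R) ^ (a + b) := by
    rw [pow_add]
    exact Ideal.mul_mem_mul (Ideal.pow_mem_pow hf a) (Ideal.pow_mem_pow hg b)
  exact Ideal.pow_le_pow_right h key

/-- Membership criterion for products of powers of lines in `I_W`. -/
theorem product_of_lines_mem_iff
    {k : Type*} [Field k]
    (h1 h2 v1 v2 : MvPolynomial (Fin 4) k)
    (hh1 : h1 ∈ Submodule.span k ({X 0, X 1} : Set (MvPolynomial (Fin 4) k)))
    (hh2 : h2 ∈ Submodule.span k ({X 0, X 1} : Set (MvPolynomial (Fin 4) k)))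
    (hhind : LinearIndependent k ![h1, h2])
    (hv1 : v1 ∈ Submodule.span k ({X 2, X 3} : Set (MvPolynomial (Fin 4) k)))
    (hv2 : v2 ∈ Submodule.span k ({X 2, X 3} : Set (MvPolynomial (Fin 4) k)))
    (hvind : LinearIndependent k ![v1, v2])
    (m11 m12 m21 : ℕ)
    (IW : Ideal (MvPolynomial (Fin 4) k))
    (hIW : IW = Ideal.span {h1, v1} ^ m11 ⊓ Ideal.span {h1, v2} ^ m12 ⊓
        Ideal.span {h2, v1} ^ m21) :
    ∀ a1 a2 b1 b2 : ℕ,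
      h1 ^ a1 * h2 ^ a2 * v1 ^ b1 * v2 ^ b2 ∈ IW ↔
        m11 ≤ a1 + b1 ∧ m12 ≤ a1 + b2 ∧ m21 ≤ a2 + b1 := by
  intro a1 a2 b1 b2
  obtain ⟨c0, c1, hc⟩ := Submodule.mem_span_pair.mp hh1
  obtain ⟨d0, d1, hd⟩ := Submodule.mem_span_pair.mp hh2
  obtain ⟨p0, p1, hp⟩ := Submodule.mem_span_pair.mp hv1
  obtain ⟨q0, q1, hq⟩ := Submodule.mem_span_pair.mp hv2
  have hdh : c0 * d1 - c1 * d0 ≠ 0 := det_ne hc hd hhind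
  have hdv : p0 * q1 - p1 * q0 ≠ 0 := det_ne hp hq hvind
  rw [hIW, Submodule.mem_inf, Submodule.mem_inf]
  constructor
  · rintro ⟨⟨H11, H12⟩, H21⟩
    refine ⟨?_, ?_, ?_⟩
    · obtain ⟨β0, β1, hb1, hb2⟩ := solve2 hdh Polynomial.X 1
      obtain ⟨γ0, γ1, hg1, hg2⟩ := solve2 hdv Polynomial.X 1
      set α : Fin 4 → Polynomial k := ![β0, β1, γ0, γ1] with hα
      have eh1 : aeval α h1 = Polynomial.X := by
        rw [← hc]; simpa [hα] using hb1
      have eh2 : aeval α h2 = 1 := by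
        rw [← hd]; simpa [hα] using hb2
      have ev1 : aeval α v1 = Polynomial.X := by
        rw [← hp]; simpa [hα] using hg1
      have ev2 : aeval α v2 = 1 := by
        rw [← hq]; simpa [hα] using hg2
      have hpv : aeval α (h1 ^ a1 * h2 ^ a2 * v1 ^ b1 * v2 ^ b2)
          = Polynomial.X ^ (a1 + b1) := by
        simp [map_mul, map_pow, eh1, eh2, ev1, ev2, pow_add]
      exact key_le h1 v1 _ m11 (a1 + b1) α eh1 ev1 hpv H11
    · obtain ⟨β0, β1, hb1, hb2⟩ := solve2 hdh Polynomial.X 1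
      obtain ⟨γ0, γ1, hg1, hg2⟩ := solve2 hdv 1 Polynomial.X
      set α : Fin 4 → Polynomial k := ![β0, β1, γ0, γ1] with hα
      have eh1 : aeval α h1 = Polynomial.X := by
        rw [← hc]; simpa [hα] using hb1
      have eh2 : aeval α h2 = 1 := by
        rw [← hd]; simpa [hα] using hb2
      have ev1 : aeval α v1 = 1 := by
        rw [← hp]; simpa [hα] using hg1
      have ev2 : aeval α v2 = Polynomial.X := by
        rw [← hq]; simpa [hα] using hg2
      have hpv : aeval α (h1 ^ a1 * h2 ^ a2 * v1 ^ b1 * v2 ^ b2)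
          = Polynomial.X ^ (a1 + b2) := by
        simp [map_mul, map_pow, eh1, eh2, ev1, ev2, pow_add]
      exact key_le h1 v2 _ m12 (a1 + b2) α eh1 ev2 hpv H12
    · obtain ⟨β0, β1, hb1, hb2⟩ := solve2 hdh 1 Polynomial.X
      obtain ⟨γ0, γ1, hg1, hg2⟩ := solve2 hdv Polynomial.X 1
      set α : Fin 4 → Polynomial k := ![β0, β1, γ0, γ1] with hα
      have eh1 : aeval α h1 = 1 := by
        rw [← hc]; simpa [hα] using hb1
      have eh2 : aeval α h2 = Polynomial.X := by
        rw [← hd]; simpa [hα] using hb2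
      have ev1 : aeval α v1 = Polynomial.X := by
        rw [← hp]; simpa [hα] using hg1
      have ev2 : aeval α v2 = 1 := by
        rw [← hq]; simpa [hα] using hg2
      have hpv : aeval α (h1 ^ a1 * h2 ^ a2 * v1 ^ b1 * v2 ^ b2)
          = Polynomial.X ^ (a2 + b1) := by
        simp [map_mul, map_pow, eh1, eh2, ev1, ev2, pow_add]
      exact key_le h2 v1 _ m21 (a2 + b1) α eh2 ev1 hpv H21
  · rintro ⟨hm11, hm12, hm21⟩
    refine ⟨⟨?_, ?_⟩, ?_⟩
    · have heq : h1 ^ a1 * h2 ^ a2 * v1 ^ b1 * v2 ^ b2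
          = (h2 ^ a2 * v2 ^ b2) * (h1 ^ a1 * v1 ^ b1) := by ring
      rw [heq]
      exact Ideal.mul_mem_left _ _ (mem_pow_of_le h1 v1 a1 b1 m11 hm11)
    · have heq : h1 ^ a1 * h2 ^ a2 * v1 ^ b1 * v2 ^ b2
          = (h2 ^ a2 * v1 ^ b1) * (h1 ^ a1 * v2 ^ b2) := by ring
      rw [heq]
      exact Ideal.mul_mem_left _ _ (mem_pow_of_le h1 v2 a1 b2 m12 hm12)
    · have heq : h1 ^ a1 * h2 ^ a2 * v1 ^ b1 * v2 ^ b2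
          = (h1 ^ a1 * v2 ^ b2) * (h2 ^ a2 * v1 ^ b1) := by ring
      rw [heq]
      exact Ideal.mul_mem_left _ _ (mem_pow_of_le h2 v1 a2 b1 m21 hm21)
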